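/- Let 𝒜 be a linear hyperplane arrangement in ℝ^n with characteristic polynomial χ_𝒜(t) = Σ_{k=0}^n (−1)^{n−k} a_k t^k, and let L be a linear subspace of ℝ^n of codimension d with 1 ≤ d ≤ n−1 that is in general position with respect to 𝒜. Let 𝒜|L = {H ∩ L : H ∈ 𝒜} be the induced arrangement of hyperplanes in L ≅ ℝ^{n−d}. Then the characteristic polynomial of 𝒜|L (computed in L, of dimension n−d) equals χ_{𝒜|L}(t) = Σ_{k=0}^{d} (−1)^{n−k} a_k + Σ_{k=d+1}^{n} (−1)^{n−k} a_k t^{k−d}. -/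

import Mathlib

open Finset Module Polynomial

/-- The rank of a finite collection `B` of linear subspaces of `ℝ^n`:
`n` minus the dimension of their intersection (the intersection over `∅` is `ℝ^n`). -/
noncomputable def arrRank (n : ℕ) (B : Finset (Submodule ℝ (Fin n → ℝ))) : ℕ :=
  n - Module.finrank ℝ ↥(B.inf id)

/-- The characteristic polynomial of a linear hyperplane arrangement `𝒜` in `ℝ^n`:
`χ_𝒜(t) = ∑_{B ⊆ 𝒜} (−1)^{#B} t^{n − rank B}` (Whitney's formula). -/
noncomputable def arrCharPoly (n : ℕ) (𝒜 : Finset (Submodule ℝ (Fin n → ℝ))) :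
    Polynomial ℤ :=
  ∑ B ∈ 𝒜.powerset, ((-1 : ℤ) ^ B.card) • (Polynomial.X ^ (n - arrRank n B))

/-- The rank, computed inside the subspace `L`, of a finite collection `B` of linear
subspaces of `ℝ^n` contained in `L`:  `dim L` minus the dimension of their intersection
(the intersection over `∅` is `L`). -/
noncomputable def arrRankIn (n : ℕ) (L : Submodule ℝ (Fin n → ℝ))
    (B : Finset (Submodule ℝ (Fin n → ℝ))) : ℕ :=
  Module.finrank ℝ ↥L - Module.finrank ℝ ↥(L ⊓ B.inf id)

/-- The characteristic polynomial, computed inside the subspace `L` (of its dimension),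
of an arrangement of hyperplanes of `L`. -/
noncomputable def arrCharPolyIn (n : ℕ) (L : Submodule ℝ (Fin n → ℝ))
    (𝒜 : Finset (Submodule ℝ (Fin n → ℝ))) : Polynomial ℤ :=
  ∑ B ∈ 𝒜.powerset,
    ((-1 : ℤ) ^ B.card) •
      (Polynomial.X ^ (Module.finrank ℝ ↥L - arrRankIn n L B))

/-- `L` (of codimension `d`) is in general position w.r.t. the arrangement `𝒜`:
for every nonempty `B ⊆ 𝒜`, `dim(∩_{H∈B} (H ∩ L)) = (n−d) − rank B` if `rank B ≤ n−d`,
and `= 0` if `rank B ≥ n−d` (both cases are expressed by the truncated subtraction). -/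
def arrGenPos (n d : ℕ) (𝒜 : Finset (Submodule ℝ (Fin n → ℝ)))
    (L : Submodule ℝ (Fin n → ℝ)) : Prop :=
  ∀ B ∈ 𝒜.powerset, B.Nonempty →
    Module.finrank ℝ ↥(B.inf id ⊓ L) = (n - d) - arrRank n B

lemma tmap_single (n d e : ℕ) (he : e ≤ n) (z : ℤ) :
    ∑ k ∈ Finset.range (n+1),
        Polynomial.C ((z • (Polynomial.X : Polynomial ℤ) ^ e).coeff k) * Polynomial.X ^ (k - d)
      = z • Polynomial.X ^ (e - d) := by
  have h : ∀ k, Polynomial.C ((z • (Polynomial.X : Polynomial ℤ) ^ e).coeff k)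
        * Polynomial.X ^ (k - d)
      = if k = e then Polynomial.C z * Polynomial.X ^ (k - d) else 0 := by
    intro k
    rw [Polynomial.coeff_smul, Polynomial.coeff_X_pow]
    split <;> simp
  rw [Finset.sum_congr rfl (fun k _ => h k),
    Finset.sum_ite_eq' (Finset.range (n+1)) e
      (fun k => Polynomial.C z * Polynomial.X ^ (k - d)),
    if_pos (Finset.mem_range.mpr (Nat.lt_succ_of_le he)), ← Polynomial.smul_eq_C_mul]

/-- The characteristic polynomial of the arrangement induced on a generic subspace `L`
of codimension `d`: `χ_{𝒜|L}(t) = ∑_{k=0}^{d} (−1)^{n−k} a_k + ∑_{k=d+1}^{n} (−1)^{n−k} a_k t^{k−d}`. -/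
theorem charPoly_restriction
    (n d : ℕ) [DecidableEq (Submodule ℝ (Fin n → ℝ))]
    (hd : 1 ≤ d) (hdn : d + 1 ≤ n)
    (𝒜 : Finset (Submodule ℝ (Fin n → ℝ)))
    (h𝒜 : ∀ H ∈ 𝒜, Module.finrank ℝ ↥H = n - 1)
    (L : Submodule ℝ (Fin n → ℝ)) (hL : Module.finrank ℝ ↥L = n - d)
    (hGP : arrGenPos n d 𝒜 L)
    (a : ℕ → ℤ)
    (ha : ∀ k, (arrCharPoly n 𝒜).coeff k = (-1) ^ (n - k) * a k) :
    arrCharPolyIn n L (𝒜.image (fun H => H ⊓ L))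
      = (∑ k ∈ Finset.range (d + 1), Polynomial.C ((-1) ^ (n - k) * a k))
        + ∑ k ∈ Finset.Icc (d + 1) n,
            Polynomial.C ((-1) ^ (n - k) * a k) * Polynomial.X ^ (k - d) := by
  have hrankTot : Module.finrank ℝ (Fin n → ℝ) = n := Module.finrank_fin_fun ℝ
  have hrank1 : ∀ H ∈ 𝒜, arrRank n {H} = 1 := by
    intro H hH
    have h1 : ({H} : Finset (Submodule ℝ (Fin n → ℝ))).inf id = H := by simp
    have := h𝒜 H hH
    rw [arrRank, h1, this]
    omega
  have hrank0 : arrRank n (∅ : Finset (Submodule ℝ (Fin n → ℝ))) = 0 := by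
    rw [arrRank]
    rw [Finset.inf_empty, finrank_top, hrankTot, Nat.sub_self]
  -- exponent simplification for arrCharPolyIn
  have hexp : ∀ B : Finset (Submodule ℝ (Fin n → ℝ)),
      Module.finrank ℝ ↥L - arrRankIn n L B = Module.finrank ℝ ↥(L ⊓ B.inf id) := by
    intro B
    have hle : Module.finrank ℝ ↥(L ⊓ B.inf id) ≤ Module.finrank ℝ ↥L :=
      Submodule.finrank_mono inf_le_left
    rw [arrRankIn, Nat.sub_sub_self hle]
  -- Step A : the restricted char poly as a sum over subsets of 𝒜
  have key : arrCharPolyIn n L (𝒜.image fun H => H ⊓ L)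
      = ∑ B ∈ 𝒜.powerset,
          ((-1 : ℤ) ^ B.card) • ((Polynomial.X : Polynomial ℤ) ^ ((n - d) - arrRank n B)) := by
    have hval : ∀ B ∈ 𝒜.powerset,
        Module.finrank ℝ ↥(L ⊓ (B.image (fun H => H ⊓ L)).inf id)
          = (n - d) - arrRank n B := by
      intro B hB
      rcases B.eq_empty_or_nonempty with rfl | hBne
      · rw [Finset.image_empty, Finset.inf_empty, inf_top_eq, hL, hrank0, Nat.sub_zero]
      · have himg : (B.image (fun H => H ⊓ L)).inf id = B.inf id ⊓ L := by
          rw [Finset.inf_image]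
          have h2 : (id ∘ fun H : Submodule ℝ (Fin n → ℝ) => H ⊓ L)
              = (id ⊓ fun _ => L) := rfl
          rw [h2, Finset.inf_inf, Finset.inf_const hBne]
        rw [himg, inf_left_comm, inf_idem]
        exact hGP B hB hBne
    by_cases hcase : 2 ≤ n - d
    · -- H ↦ H ⊓ L is injective on 𝒜
      have hinj : ∀ H₁ ∈ 𝒜, ∀ H₂ ∈ 𝒜, H₁ ⊓ L = H₂ ⊓ L → H₁ = H₂ := by
        intro H₁ h₁ H₂ h₂ heq
        by_contra hne
        have hsub : ¬ H₂ ≤ H₁ := by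
          intro hle
          exact hne (Submodule.eq_of_le_of_finrank_le hle
            (by rw [h𝒜 H₁ h₁, h𝒜 H₂ h₂])).symm
        have hlt : H₁ < H₁ ⊔ H₂ := left_lt_sup.mpr hsub
        have hsup_le : Module.finrank ℝ ↥(H₁ ⊔ H₂) ≤ n :=
          le_trans (Submodule.finrank_le _) (le_of_eq hrankTot)
        have hsup_gt : n - 1 < Module.finrank ℝ ↥(H₁ ⊔ H₂) := by
          rw [← h𝒜 H₁ h₁]
          exact Submodule.finrank_lt_finrank_of_lt hlt
        have hadd := Submodule.finrank_sup_add_finrank_inf_eq H₁ H₂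
        rw [h𝒜 H₁ h₁, h𝒜 H₂ h₂] at hadd
        have hinf : Module.finrank ℝ ↥(H₁ ⊓ H₂) = n - 2 := by omega
        have hpairmem : ({H₁, H₂} : Finset (Submodule ℝ (Fin n → ℝ))) ∈ 𝒜.powerset := by
          rw [Finset.mem_powerset]
          intro x hx
          rcases Finset.mem_insert.mp hx with rfl | hx
          · exact h₁
          · rw [Finset.mem_singleton.mp hx]; exact h₂
        have hpairinf : ({H₁, H₂} : Finset (Submodule ℝ (Fin n → ℝ))).inf id = H₁ ⊓ H₂ := by
          simp
        have hrankpair : arrRank n {H₁, H₂} = 2 := by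
          rw [arrRank, hpairinf, hinf]; omega
        have h2 := hGP {H₁, H₂} hpairmem ⟨H₁, by simp⟩
        have h1 := hGP {H₁} (by rw [Finset.mem_powerset]; simpa using h₁) ⟨H₁, by simp⟩
        rw [hrank1 H₁ h₁] at h1
        rw [hrankpair, hpairinf] at h2
        rw [Finset.inf_singleton, id_eq] at h1
        have hineq : H₁ ⊓ H₂ ⊓ L = H₁ ⊓ L := by
          apply le_antisymm
          · exact inf_le_inf_right L inf_le_left
          · refine le_inf (le_inf inf_le_left ?_) inf_le_right
            exact le_trans (le_of_eq heq) inf_le_left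
        rw [hineq, h1] at h2
        omega
      rw [arrCharPolyIn]
      refine (Finset.sum_bij (fun B _ => B.image (fun H => H ⊓ L)) ?_ ?_ ?_ ?_).symm
      · intro B hB
        rw [Finset.mem_powerset] at hB ⊢
        exact Finset.image_subset_image hB
      · intro B₁ hB₁ B₂ hB₂ h
        rw [Finset.mem_powerset] at hB₁ hB₂
        have hsub : ∀ C₁ C₂ : Finset (Submodule ℝ (Fin n → ℝ)), C₁ ⊆ 𝒜 → C₂ ⊆ 𝒜 →
            C₁.image (fun H => H ⊓ L) ⊆ C₂.image (fun H => H ⊓ L) → C₁ ⊆ C₂ := by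
          intro C₁ C₂ hC₁ hC₂ hI H hH
          have : (H ⊓ L) ∈ C₂.image (fun H => H ⊓ L) :=
            hI (Finset.mem_image_of_mem _ hH)
          obtain ⟨H', hH', hHH⟩ := Finset.mem_image.mp this
          rwa [hinj H' (hC₂ hH') H (hC₁ hH) hHH] at hH'
        exact Finset.Subset.antisymm
          (hsub B₁ B₂ hB₁ hB₂ (le_of_eq h)) (hsub B₂ B₁ hB₂ hB₁ (le_of_eq h.symm))
      · intro B' hB'
        rw [Finset.mem_powerset] at hB'
        refine ⟨𝒜.filter (fun H => H ⊓ L ∈ B'), Finset.mem_powerset.mpr (Finset.filter_subset _ _), ?_⟩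
        ext b
        constructor
        · intro hb
          obtain ⟨H, hH, rfl⟩ := Finset.mem_image.mp hb
          exact (Finset.mem_filter.mp hH).2
        · intro hb
          obtain ⟨H, hH, rfl⟩ := Finset.mem_image.mp (hB' hb)
          exact Finset.mem_image_of_mem _ (Finset.mem_filter.mpr ⟨hH, hb⟩)
      · intro B hB
        have hcard : (B.image (fun H => H ⊓ L)).card = B.card := by
          apply Finset.card_image_of_injOn
          intro x hx y hy hxy
          exact hinj x ((Finset.mem_powerset.mp hB) hx) y ((Finset.mem_powerset.mp hB) hy) hxy
        rw [hexp, hval B hB, hcard]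
    · -- degenerate case : n - d = 1
      have hnd1 : n - d = 1 := by omega
      have hbot : ∀ H ∈ 𝒜, H ⊓ L = ⊥ := by
        intro H hH
        have h1 := hGP {H} (by rw [Finset.mem_powerset]; simpa using hH) ⟨H, by simp⟩
        rw [hrank1 H hH, hnd1] at h1
        rw [Finset.inf_singleton, id_eq] at h1
        exact Submodule.finrank_eq_zero.mp h1
      have hexp0 : ∀ B ∈ 𝒜.powerset, B.Nonempty → (n - d) - arrRank n B = 0 := by
        intro B hB ⟨H, hH⟩
        have hHA : H ∈ 𝒜 := (Finset.mem_powerset.mp hB) hH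
        have hle : B.inf id ≤ H := Finset.inf_le hH
        have hfr : Module.finrank ℝ ↥(B.inf id) ≤ n - 1 := by
          rw [← h𝒜 H hHA]
          exact Submodule.finrank_mono hle
        rw [arrRank]
        omega
      rcases 𝒜.eq_empty_or_nonempty with rfl | hA
      · rw [Finset.image_empty, arrCharPolyIn]
        refine Finset.sum_congr rfl fun B hB => ?_
        rw [Finset.mem_powerset, Finset.subset_empty] at hB
        subst hB
        rw [hexp, Finset.inf_empty, inf_top_eq, hL, hrank0, Nat.sub_zero]
      · have himg : 𝒜.image (fun H => H ⊓ L) = {(⊥ : Submodule ℝ (Fin n → ℝ))} := by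
          rw [Finset.image_congr (g := fun _ => ⊥) (fun H hH => hbot H hH),
            Finset.image_const hA]
        rw [himg]
        have hpow : ({(⊥ : Submodule ℝ (Fin n → ℝ))} : Finset _).powerset
            = {∅, {⊥}} := by
          ext B
          simp [Finset.mem_powerset, Finset.subset_singleton_iff]
        have hne : (∅ : Finset (Submodule ℝ (Fin n → ℝ))) ≠ {⊥} :=
          (Finset.singleton_ne_empty ⊥).symm
        rw [arrCharPolyIn, hpow, Finset.sum_pair hne]
        -- compute the two terms
        have t1 : Module.finrank ℝ ↥L - arrRankIn n L (∅ : Finset (Submodule ℝ (Fin n → ℝ))) = 1 := by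
          rw [hexp, Finset.inf_empty, inf_top_eq, hL, hnd1]
        have t2 : Module.finrank ℝ ↥L - arrRankIn n L ({⊥} : Finset (Submodule ℝ (Fin n → ℝ))) = 0 := by
          rw [hexp, Finset.inf_singleton, id_eq, inf_bot_eq, finrank_bot]
        rw [t1, t2]
        -- now the right-hand sum
        rw [← Finset.add_sum_erase _ _ (Finset.mem_powerset.mpr (Finset.empty_subset 𝒜))]
        have hz : ∀ B ∈ 𝒜.powerset.erase ∅,
            ((-1 : ℤ) ^ B.card) • ((Polynomial.X : Polynomial ℤ) ^ ((n - d) - arrRank n B))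
              = ((-1 : ℤ) ^ B.card) • (1 : Polynomial ℤ) := by
          intro B hB
          have hBp := Finset.mem_of_mem_erase hB
          have hBne : B.Nonempty :=
            Finset.nonempty_of_ne_empty (Finset.ne_of_mem_erase hB)
          rw [hexp0 B hBp hBne, pow_zero]
        rw [Finset.sum_congr rfl hz, ← Finset.sum_smul,
          Finset.sum_erase_eq_sub (Finset.mem_powerset.mpr (Finset.empty_subset 𝒜)),
          Finset.sum_powerset_neg_one_pow_card_of_nonempty hA]
        rw [hrank0]
        simp [hnd1]
  -- Step B : the right-hand side as the same sum
  have hBsum : (∑ k ∈ Finset.range (d + 1), Polynomial.C ((-1 : ℤ) ^ (n - k) * a k))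
        + ∑ k ∈ Finset.Icc (d + 1) n,
            Polynomial.C ((-1 : ℤ) ^ (n - k) * a k) * Polynomial.X ^ (k - d)
      = ∑ B ∈ 𝒜.powerset,
          ((-1 : ℤ) ^ B.card) • ((Polynomial.X : Polynomial ℤ) ^ ((n - d) - arrRank n B)) := by
    have hc : ∀ k, Polynomial.C ((-1 : ℤ) ^ (n - k) * a k)
        = Polynomial.C ((arrCharPoly n 𝒜).coeff k) := fun k => by rw [ha k]
    calc
      (∑ k ∈ Finset.range (d + 1), Polynomial.C ((-1 : ℤ) ^ (n - k) * a k))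
          + ∑ k ∈ Finset.Icc (d + 1) n,
              Polynomial.C ((-1 : ℤ) ^ (n - k) * a k) * Polynomial.X ^ (k - d)
        = (∑ k ∈ Finset.range (d + 1),
              Polynomial.C ((arrCharPoly n 𝒜).coeff k) * Polynomial.X ^ (k - d))
          + ∑ k ∈ Finset.Icc (d + 1) n,
              Polynomial.C ((arrCharPoly n 𝒜).coeff k) * Polynomial.X ^ (k - d) := by
          congr 1
          · refine Finset.sum_congr rfl fun k hk => ?_
            rw [hc, Nat.sub_eq_zero_of_le (Nat.lt_succ_iff.mp (Finset.mem_range.mp hk)),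
              pow_zero, mul_one]
          · exact Finset.sum_congr rfl fun k _ => by rw [hc]
      _ = ∑ k ∈ Finset.range (n + 1),
              Polynomial.C ((arrCharPoly n 𝒜).coeff k) * Polynomial.X ^ (k - d) := by
          rw [Finset.range_eq_Ico, ← Finset.Ico_add_one_right_eq_Icc (d+1) n,
            Finset.sum_Ico_consecutive
              (fun k => Polynomial.C ((arrCharPoly n 𝒜).coeff k) * Polynomial.X ^ (k - d))
              (Nat.zero_le (d+1)) (by omega : d + 1 ≤ n + 1),
            Finset.range_eq_Ico]
      _ = ∑ B ∈ 𝒜.powerset, ∑ k ∈ Finset.range (n + 1),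
            Polynomial.C ((((-1 : ℤ) ^ B.card)
                • ((Polynomial.X : Polynomial ℤ) ^ (n - arrRank n B))).coeff k)
              * Polynomial.X ^ (k - d) := by
          rw [arrCharPoly]
          simp_rw [Polynomial.finset_sum_coeff, map_sum, Finset.sum_mul]
          rw [Finset.sum_comm]
      _ = ∑ B ∈ 𝒜.powerset,
            ((-1 : ℤ) ^ B.card) • ((Polynomial.X : Polynomial ℤ) ^ ((n - arrRank n B) - d)) :=
          Finset.sum_congr rfl fun B _ => tmap_single n d _ (Nat.sub_le n _) _
      _ = ∑ B ∈ 𝒜.powerset,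
            ((-1 : ℤ) ^ B.card) • ((Polynomial.X : Polynomial ℤ) ^ ((n - d) - arrRank n B)) := by
          refine Finset.sum_congr rfl fun B _ => ?_
          rw [Nat.sub_right_comm]
  rw [key, ← hBsum]
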